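/- Let j ≥ 0 be an integer and let w : ℝ² → ℝ be continuously differentiable. Suppose u₀ ∈ Q_j satisfies ∫_K (w − u₀) p dx dy = 0 for every p ∈ Q_j; suppose for each m ∈ {1,2,3,4} that u_{b,m} is a polynomial of degree ≤ j in the coordinate running along F_m with ∫_{F_m} (w − u_{b,m}) p ds = 0 for every univariate polynomial p of degree ≤ j; and suppose G ∈ RT_j(K) satisfies ∫_K G·q dx dy = −∫_K u₀ (div q) dx dy + Σ_{m=1}^{4} ∫_{F_m} u_{b,m} (q·n_m) ds for every q ∈ RT_j(K). Then G is the best L² approximation of ∇w from RT_j(K): for every q ∈ RT_j(K), ∫_K |G − ∇w|² dx dy ≤ ∫_K |q − ∇w|² dx dy. -/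

import Mathlib

open MeasureTheory MvPolynomial

noncomputable section

/-- Real polynomials in two variables. -/
abbrev Poly2 := MvPolynomial (Fin 2) ℝ

/-- Evaluate a two-variable polynomial at `(x, y)`. -/
def evalP (p : Poly2) (x y : ℝ) : ℝ := MvPolynomial.eval ![x, y] p

/-- `Q_{r,s}`: degree `≤ r` in the first variable and `≤ s` in the second. -/
def memQ (r s : ℕ) (p : Poly2) : Prop := p.degreeOf 0 ≤ r ∧ p.degreeOf 1 ≤ s

/-- The divergence of a polynomial vector field. -/
def divP (q : Poly2 × Poly2) : Poly2 := pderiv 0 q.1 + pderiv 1 q.2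

/-- The Raviart–Thomas space `RT_j(K) = Q_{j+1,j} × Q_{j,j+1}`. -/
def memRT (j : ℕ) (q : Poly2 × Poly2) : Prop := memQ (j+1) j q.1 ∧ memQ j (j+1) q.2

lemma degreeOf_monomial_le (s : Fin 2 →₀ ℕ) (a : ℝ) (k : Fin 2) :
    (monomial s a).degreeOf k ≤ s k := by
  rcases eq_or_ne a 0 with rfl | ha
  · simp
  · rw [degreeOf_monomial_eq s k ha]

lemma degreeOf_pderiv_le (p : Poly2) (i k : Fin 2) :
    (pderiv i p).degreeOf k ≤ p.degreeOf k := by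
  conv_lhs => rw [p.as_sum]
  rw [map_sum]
  refine (degreeOf_sum_le k _ _).trans ?_
  refine Finset.sup_le fun m hm => ?_
  rw [pderiv_monomial]
  refine (degreeOf_monomial_le _ _ _).trans ?_
  refine le_trans ?_ (monomial_le_degreeOf k hm)
  simp [Finsupp.sub_apply]

lemma memQ_sub {r s : ℕ} {p q : Poly2} (hp : memQ r s p) (hq : memQ r s q) :
    memQ r s (p - q) :=
  ⟨(degreeOf_sub_le 0 p q).trans (max_le hp.1 hq.1),
   (degreeOf_sub_le 1 p q).trans (max_le hp.2 hq.2)⟩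

lemma memRT_sub {j : ℕ} {p q : Poly2 × Poly2} (hp : memRT j p) (hq : memRT j q) :
    memRT j (p.1 - q.1, p.2 - q.2) :=
  ⟨memQ_sub hp.1 hq.1, memQ_sub hp.2 hq.2⟩

lemma degreeOf_pderiv_self_le {p : Poly2} {i : Fin 2} {n : ℕ} (h : p.degreeOf i ≤ n + 1) :
    (pderiv i p).degreeOf i ≤ n := by
  conv_lhs => rw [p.as_sum]
  rw [map_sum]
  refine (degreeOf_sum_le i _ _).trans ?_
  refine Finset.sup_le fun m hm => ?_
  rw [pderiv_monomial]
  rcases Nat.eq_zero_or_pos (m i) with h0 | h0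
  · rw [h0]
    push_cast
    rw [mul_zero, map_zero]
    simp
  · refine (degreeOf_monomial_le _ _ _).trans ?_
    have hmi : m i ≤ n + 1 := (monomial_le_degreeOf i hm).trans h
    rw [Finsupp.tsub_apply, Finsupp.single_eq_same]
    omega

lemma memQ_divP {j : ℕ} {q : Poly2 × Poly2} (hq : memRT j q) : memQ j j (divP q) := by
  constructor
  · refine (degreeOf_add_le _ _ _).trans (max_le ?_ ?_)
    · exact degreeOf_pderiv_self_le hq.1.1
    · exact (degreeOf_pderiv_le q.2 1 0).trans hq.2.1
  · refine (degreeOf_add_le _ _ _).trans (max_le ?_ ?_)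
    · exact (degreeOf_pderiv_le q.1 0 1).trans hq.1.2
    · exact degreeOf_pderiv_self_le hq.2.2


lemma continuous_evalP (p : Poly2) : Continuous fun z : ℝ × ℝ => evalP p z.1 z.2 := by
  have h1 : Continuous fun z : ℝ × ℝ => (![z.1, z.2] : Fin 2 → ℝ) := by
    refine continuous_pi fun i => ?_
    fin_cases i
    · simpa using continuous_fst
    · simpa using continuous_snd
  have h2 : Continuous fun v : Fin 2 → ℝ => MvPolynomial.eval v p := MvPolynomial.continuous_eval p
  exact h2.comp h1

lemma hasDerivAt_evalP_fst (p : Poly2) (y x : ℝ) :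
    HasDerivAt (fun t => evalP p t y) (evalP (pderiv 0 p) x y) x := by
  induction p using MvPolynomial.induction_on with
  | C a => simpa [evalP, pderiv_C] using hasDerivAt_const x a
  | add p q hp hq => simpa [evalP, map_add] using hp.fun_add hq
  | mul_X p i hp =>
      fin_cases i
      · have := hp.fun_mul (hasDerivAt_id x)
        simpa [evalP, pderiv_mul, map_add, Matrix.cons_val_zero, mul_comm, mul_add, add_comm]
          using this
      · have := hp.mul_const y
        simp only [evalP, pderiv_mul, map_add, eval_mul, eval_X, Matrix.cons_val_one,
          Matrix.head_cons, Fin.mk_one, pderiv_X_of_ne (show (1 : Fin 2) ≠ 0 by decide),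
          map_zero, mul_zero, add_zero] at *
        exact this

lemma hasDerivAt_evalP_snd (p : Poly2) (x y : ℝ) :
    HasDerivAt (fun t => evalP p x t) (evalP (pderiv 1 p) x y) y := by
  induction p using MvPolynomial.induction_on with
  | C a => simpa [evalP, pderiv_C] using hasDerivAt_const y a
  | add p q hp hq => simpa [evalP, map_add] using hp.fun_add hq
  | mul_X p i hp =>
      fin_cases i
      · have := hp.mul_const x
        simp only [evalP, pderiv_mul, map_add, eval_mul, eval_X, Matrix.cons_val_zero,
          Fin.zero_eta, pderiv_X_of_ne (show (0 : Fin 2) ≠ 1 by decide),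
          map_zero, mul_zero, add_zero] at *
        exact this
      · have := hp.fun_mul (hasDerivAt_id y)
        simpa [evalP, pderiv_mul, map_add, Matrix.cons_val_one, Matrix.head_cons,
          mul_comm, mul_add, add_comm] using this

def traceX (c : ℝ) (p : Poly2) : Polynomial ℝ :=
  MvPolynomial.aeval ![Polynomial.C c, Polynomial.X] p

def traceY (c : ℝ) (p : Poly2) : Polynomial ℝ :=
  MvPolynomial.aeval ![Polynomial.X, Polynomial.C c] p

lemma traceX_eval (c : ℝ) (p : Poly2) (y : ℝ) : (traceX c p).eval y = evalP p c y := by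
  induction p using MvPolynomial.induction_on with
  | C a => simp [traceX, evalP]
  | add p q hp hq => simp [traceX, evalP, map_add] at *; rw [hp, hq]
  | mul_X p i hp =>
      fin_cases i <;>
        simp_all [traceX, evalP, map_mul, Polynomial.eval_mul]

lemma traceY_eval (c : ℝ) (p : Poly2) (x : ℝ) : (traceY c p).eval x = evalP p x c := by
  induction p using MvPolynomial.induction_on with
  | C a => simp [traceY, evalP]
  | add p q hp hq => simp [traceY, evalP, map_add] at *; rw [hp, hq]
  | mul_X p i hp =>
      fin_cases i <;>
        simp_all [traceY, evalP, map_mul, Polynomial.eval_mul]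

lemma traceX_natDegree_le (c : ℝ) (p : Poly2) : (traceX c p).natDegree ≤ p.degreeOf 1 := by
  rw [traceX]
  conv_lhs => rw [p.as_sum]
  rw [map_sum]
  refine (Polynomial.natDegree_sum_le _ _).trans ?_
  rw [Finset.fold_max_le]
  refine ⟨Nat.zero_le _, fun m hm => ?_⟩
  refine le_trans ?_ (monomial_le_degreeOf 1 hm)
  simp only [Function.comp_apply]
  rw [aeval_monomial]
  refine (Polynomial.natDegree_mul_le).trans ?_
  have h1 : (algebraMap ℝ (Polynomial ℝ) (coeff m p)).natDegree = 0 := by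
    simp [Polynomial.algebraMap_eq]
  rw [h1, zero_add, Finsupp.prod]
  refine (Polynomial.natDegree_prod_le _ _).trans ?_
  refine le_trans (Finset.sum_le_sum_of_subset (Finset.subset_univ m.support)) ?_
  rw [Fin.sum_univ_two]
  have h2 : (![Polynomial.C c, Polynomial.X] 0 ^ m 0).natDegree = 0 := by
    simp
  have h3 : (![Polynomial.C c, Polynomial.X] 1 ^ m 1).natDegree ≤ m 1 := by
    simp
  omega


lemma traceY_natDegree_le (c : ℝ) (p : Poly2) : (traceY c p).natDegree ≤ p.degreeOf 0 := by
  rw [traceY]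
  conv_lhs => rw [p.as_sum]
  rw [map_sum]
  refine (Polynomial.natDegree_sum_le _ _).trans ?_
  rw [Finset.fold_max_le]
  refine ⟨Nat.zero_le _, fun m hm => ?_⟩
  refine le_trans ?_ (monomial_le_degreeOf 0 hm)
  simp only [Function.comp_apply]
  rw [aeval_monomial]
  refine (Polynomial.natDegree_mul_le).trans ?_
  have h1 : (algebraMap ℝ (Polynomial ℝ) (coeff m p)).natDegree = 0 := by
    simp [Polynomial.algebraMap_eq]
  rw [h1, zero_add, Finsupp.prod]
  refine (Polynomial.natDegree_prod_le _ _).trans ?_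
  refine le_trans (Finset.sum_le_sum_of_subset (Finset.subset_univ m.support)) ?_
  rw [Fin.sum_univ_two]
  have h2 : (![Polynomial.X, Polynomial.C c] 1 ^ m 1).natDegree = 0 := by
    simp
  have h3 : (![Polynomial.X, Polynomial.C c] 0 ^ m 0).natDegree ≤ m 0 := by
    simp
  omega

section Analysis

variable {x₀ x₁ y₀ y₁ : ℝ}

lemma integrableOn_K {F : ℝ × ℝ → ℝ} (hF : Continuous F) :
    IntegrableOn F (Set.Icc x₀ x₁ ×ˢ Set.Icc y₀ y₁) volume :=
  hF.continuousOn.integrableOn_compact (isCompact_Icc.prod isCompact_Icc)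

lemma restrict_prod_eq :
    (volume : Measure (ℝ × ℝ)).restrict (Set.Icc x₀ x₁ ×ˢ Set.Icc y₀ y₁)
      = ((volume : Measure ℝ).restrict (Set.Icc x₀ x₁)).prod
          ((volume : Measure ℝ).restrict (Set.Icc y₀ y₁)) := by
  rw [MeasureTheory.Measure.volume_eq_prod, Measure.prod_restrict]

lemma setInt_eq_iterXY (hx : x₀ ≤ x₁) (hy : y₀ ≤ y₁) {F : ℝ × ℝ → ℝ} (hF : Continuous F) :
    (∫ z in Set.Icc x₀ x₁ ×ˢ Set.Icc y₀ y₁, F z)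
      = ∫ x in x₀..x₁, ∫ y in y₀..y₁, F (x, y) := by
  have hint : Integrable F (((volume : Measure ℝ).restrict (Set.Icc x₀ x₁)).prod
      ((volume : Measure ℝ).restrict (Set.Icc y₀ y₁))) := by
    rw [← restrict_prod_eq]; exact integrableOn_K hF
  rw [show (∫ z in Set.Icc x₀ x₁ ×ˢ Set.Icc y₀ y₁, F z) = ∫ z, F z
      ∂(((volume : Measure ℝ).restrict (Set.Icc x₀ x₁)).prod
        ((volume : Measure ℝ).restrict (Set.Icc y₀ y₁))) by rw [← restrict_prod_eq]]
  rw [integral_prod _ hint]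
  rw [intervalIntegral.integral_of_le hx, ← integral_Icc_eq_integral_Ioc]
  refine setIntegral_congr_fun measurableSet_Icc fun x _ => ?_
  rw [intervalIntegral.integral_of_le hy, ← integral_Icc_eq_integral_Ioc]

lemma setInt_eq_iterYX (hx : x₀ ≤ x₁) (hy : y₀ ≤ y₁) {F : ℝ × ℝ → ℝ} (hF : Continuous F) :
    (∫ z in Set.Icc x₀ x₁ ×ˢ Set.Icc y₀ y₁, F z)
      = ∫ y in y₀..y₁, ∫ x in x₀..x₁, F (x, y) := by
  have hint : Integrable F (((volume : Measure ℝ).restrict (Set.Icc x₀ x₁)).prod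
      ((volume : Measure ℝ).restrict (Set.Icc y₀ y₁))) := by
    rw [← restrict_prod_eq]; exact integrableOn_K hF
  rw [show (∫ z in Set.Icc x₀ x₁ ×ˢ Set.Icc y₀ y₁, F z) = ∫ z, F z
      ∂(((volume : Measure ℝ).restrict (Set.Icc x₀ x₁)).prod
        ((volume : Measure ℝ).restrict (Set.Icc y₀ y₁))) by rw [← restrict_prod_eq]]
  rw [integral_prod_symm _ hint]
  rw [intervalIntegral.integral_of_le hy, ← integral_Icc_eq_integral_Ioc]
  refine setIntegral_congr_fun measurableSet_Icc fun y _ => ?_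
  rw [intervalIntegral.integral_of_le hx, ← integral_Icc_eq_integral_Ioc]

end Analysis

section IBP

variable {x₀ x₁ y₀ y₁ : ℝ} {w : ℝ × ℝ → ℝ}

lemma continuous_fderiv_app (hw : ContDiff ℝ 1 w) (v : ℝ × ℝ) :
    Continuous fun z => fderiv ℝ w z v := by
  have h1 : Continuous fun z => fderiv ℝ w z := hw.continuous_fderiv one_ne_zero
  exact (ContinuousLinearMap.apply ℝ ℝ v).continuous.comp h1

lemma hasDerivAt_w_fst (hw : ContDiff ℝ 1 w) (y x : ℝ) :
    HasDerivAt (fun t => w (t, y)) (fderiv ℝ w (x, y) (1, 0)) x := by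
  have h1 : HasFDerivAt w (fderiv ℝ w (x, y)) (x, y) :=
    (hw.differentiable one_ne_zero (x, y)).hasFDerivAt
  have h2 : HasDerivAt (fun t : ℝ => (t, y)) ((1 : ℝ), (0 : ℝ)) x :=
    (hasDerivAt_id x).prodMk (hasDerivAt_const x y)
  exact h1.comp_hasDerivAt x h2

lemma hasDerivAt_w_snd (hw : ContDiff ℝ 1 w) (x y : ℝ) :
    HasDerivAt (fun t => w (x, t)) (fderiv ℝ w (x, y) (0, 1)) y := by
  have h1 : HasFDerivAt w (fderiv ℝ w (x, y)) (x, y) :=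
    (hw.differentiable one_ne_zero (x, y)).hasFDerivAt
  have h2 : HasDerivAt (fun t : ℝ => (x, t)) ((0 : ℝ), (1 : ℝ)) y :=
    (hasDerivAt_const y x).prodMk (hasDerivAt_id y)
  exact h1.comp_hasDerivAt y h2

lemma cont_line_x (hF : Continuous w) (c : ℝ) : Continuous fun y : ℝ => w (c, y) :=
  hF.comp (continuous_const.prodMk continuous_id)

lemma cont_line_y (hF : Continuous w) (c : ℝ) : Continuous fun x : ℝ => w (x, c) :=
  hF.comp (continuous_id.prodMk continuous_const)

lemma ibp_x (hx : x₀ ≤ x₁) (hy : y₀ ≤ y₁) (hw : ContDiff ℝ 1 w) (p : Poly2) :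
    (∫ z in Set.Icc x₀ x₁ ×ˢ Set.Icc y₀ y₁,
        (fderiv ℝ w z (1, 0) * evalP p z.1 z.2 + w z * evalP (pderiv 0 p) z.1 z.2))
      = (∫ y in y₀..y₁, w (x₁, y) * evalP p x₁ y)
        - ∫ y in y₀..y₁, w (x₀, y) * evalP p x₀ y := by
  have hcont : Continuous fun z : ℝ × ℝ =>
      fderiv ℝ w z (1, 0) * evalP p z.1 z.2 + w z * evalP (pderiv 0 p) z.1 z.2 :=
    ((continuous_fderiv_app hw _).fun_mul (continuous_evalP p)).fun_add
      (hw.continuous.fun_mul (continuous_evalP (pderiv 0 p)))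
  rw [setInt_eq_iterYX hx hy hcont]
  have key : ∀ y : ℝ, (∫ x in x₀..x₁,
      (fderiv ℝ w (x, y) (1, 0) * evalP p x y + w (x, y) * evalP (pderiv 0 p) x y))
      = w (x₁, y) * evalP p x₁ y - w (x₀, y) * evalP p x₀ y := by
    intro y
    refine intervalIntegral.integral_eq_sub_of_hasDerivAt
      (fun x _ => (hasDerivAt_w_fst hw y x).mul (hasDerivAt_evalP_fst p y x)) ?_
    exact (hcont.comp (continuous_id.prodMk continuous_const)).intervalIntegrable x₀ x₁
  rw [intervalIntegral.integral_congr (g := fun y =>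
      w (x₁, y) * evalP p x₁ y - w (x₀, y) * evalP p x₀ y) (fun y _ => key y)]
  exact intervalIntegral.integral_sub
    (((cont_line_x hw.continuous x₁).fun_mul
      ((continuous_evalP p).comp (continuous_const.prodMk continuous_id))).intervalIntegrable _ _)
    (((cont_line_x hw.continuous x₀).fun_mul
      ((continuous_evalP p).comp (continuous_const.prodMk continuous_id))).intervalIntegrable _ _)

lemma ibp_y (hx : x₀ ≤ x₁) (hy : y₀ ≤ y₁) (hw : ContDiff ℝ 1 w) (p : Poly2) :
    (∫ z in Set.Icc x₀ x₁ ×ˢ Set.Icc y₀ y₁,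
        (fderiv ℝ w z (0, 1) * evalP p z.1 z.2 + w z * evalP (pderiv 1 p) z.1 z.2))
      = (∫ x in x₀..x₁, w (x, y₁) * evalP p x y₁)
        - ∫ x in x₀..x₁, w (x, y₀) * evalP p x y₀ := by
  have hcont : Continuous fun z : ℝ × ℝ =>
      fderiv ℝ w z (0, 1) * evalP p z.1 z.2 + w z * evalP (pderiv 1 p) z.1 z.2 :=
    ((continuous_fderiv_app hw _).fun_mul (continuous_evalP p)).fun_add
      (hw.continuous.fun_mul (continuous_evalP (pderiv 1 p)))
  rw [setInt_eq_iterXY hx hy hcont]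
  have key : ∀ x : ℝ, (∫ y in y₀..y₁,
      (fderiv ℝ w (x, y) (0, 1) * evalP p x y + w (x, y) * evalP (pderiv 1 p) x y))
      = w (x, y₁) * evalP p x y₁ - w (x, y₀) * evalP p x y₀ := by
    intro x
    refine intervalIntegral.integral_eq_sub_of_hasDerivAt
      (fun y _ => (hasDerivAt_w_snd hw x y).mul (hasDerivAt_evalP_snd p x y)) ?_
    exact (hcont.comp (continuous_const.prodMk continuous_id)).intervalIntegrable y₀ y₁
  rw [intervalIntegral.integral_congr (g := fun x =>
      w (x, y₁) * evalP p x y₁ - w (x, y₀) * evalP p x y₀) (fun x _ => key x)]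
  exact intervalIntegral.integral_sub
    (((cont_line_y hw.continuous y₁).fun_mul
      ((continuous_evalP p).comp (continuous_id.prodMk continuous_const))).intervalIntegrable _ _)
    (((cont_line_y hw.continuous y₀).fun_mul
      ((continuous_evalP p).comp (continuous_id.prodMk continuous_const))).intervalIntegrable _ _)

end IBP

lemma evalP_sub (p q : Poly2) (x y : ℝ) : evalP (p - q) x y = evalP p x y - evalP q x y := by
  simp [evalP]

set_option maxHeartbeats 2000000 in
/-- If `u₀` is the `L²(K)`-projection of `w` onto `Q_j`, each `u_{b,m}` is the
`L²(F_m)`-projection of `w` onto polynomials of degree `≤ j` on the edge `F_m`, and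
`G ∈ RT_j(K)` is the associated discrete weak gradient, then `G` is the best `L²(K)` approximation of
`∇w` from `RT_j(K)`. -/
theorem statement4 (j : ℕ) (x₀ x₁ y₀ y₁ : ℝ) (hx : x₀ < x₁) (hy : y₀ < y₁)
    (w : ℝ × ℝ → ℝ) (hw : ContDiff ℝ 1 w)
    (u₀ : Poly2) (hu₀ : memQ j j u₀)
    (hu₀proj : ∀ p : Poly2, memQ j j p →
      (∫ z in Set.Icc x₀ x₁ ×ˢ Set.Icc y₀ y₁, (w z - evalP u₀ z.1 z.2) * evalP p z.1 z.2) = 0)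
    (ub₁ ub₂ ub₃ ub₄ : Polynomial ℝ)
    (hb₁ : ub₁.natDegree ≤ j) (hb₂ : ub₂.natDegree ≤ j)
    (hb₃ : ub₃.natDegree ≤ j) (hb₄ : ub₄.natDegree ≤ j)
    (hub₁ : ∀ p : Polynomial ℝ, p.natDegree ≤ j →
      (∫ y in y₀..y₁, (w (x₀, y) - ub₁.eval y) * p.eval y) = 0)
    (hub₂ : ∀ p : Polynomial ℝ, p.natDegree ≤ j →
      (∫ y in y₀..y₁, (w (x₁, y) - ub₂.eval y) * p.eval y) = 0)
    (hub₃ : ∀ p : Polynomial ℝ, p.natDegree ≤ j →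
      (∫ x in x₀..x₁, (w (x, y₀) - ub₃.eval x) * p.eval x) = 0)
    (hub₄ : ∀ p : Polynomial ℝ, p.natDegree ≤ j →
      (∫ x in x₀..x₁, (w (x, y₁) - ub₄.eval x) * p.eval x) = 0)
    (G : Poly2 × Poly2) (hG : memRT j G)
    (hGdef : ∀ q : Poly2 × Poly2, memRT j q →
      (∫ z in Set.Icc x₀ x₁ ×ˢ Set.Icc y₀ y₁,
        (evalP G.1 z.1 z.2 * evalP q.1 z.1 z.2 + evalP G.2 z.1 z.2 * evalP q.2 z.1 z.2))
      = -(∫ z in Set.Icc x₀ x₁ ×ˢ Set.Icc y₀ y₁, evalP u₀ z.1 z.2 * evalP (divP q) z.1 z.2)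
        + ((∫ y in y₀..y₁, ub₁.eval y * (-(evalP q.1 x₀ y)))
          + (∫ y in y₀..y₁, ub₂.eval y * evalP q.1 x₁ y)
          + (∫ x in x₀..x₁, ub₃.eval x * (-(evalP q.2 x y₀)))
          + (∫ x in x₀..x₁, ub₄.eval x * evalP q.2 x y₁))) :
    ∀ q : Poly2 × Poly2, memRT j q →
      (∫ z in Set.Icc x₀ x₁ ×ˢ Set.Icc y₀ y₁,
        ((evalP G.1 z.1 z.2 - fderiv ℝ w z (1, 0)) ^ 2
          + (evalP G.2 z.1 z.2 - fderiv ℝ w z (0, 1)) ^ 2))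
      ≤ ∫ z in Set.Icc x₀ x₁ ×ˢ Set.Icc y₀ y₁,
        ((evalP q.1 z.1 z.2 - fderiv ℝ w z (1, 0)) ^ 2
          + (evalP q.2 z.1 z.2 - fderiv ℝ w z (0, 1)) ^ 2) := by
  have hKm : MeasurableSet (Set.Icc x₀ x₁ ×ˢ Set.Icc y₀ y₁) :=
    measurableSet_Icc.prod measurableSet_Icc
  have hwc : Continuous w := hw.continuous
  have hf₁ : Continuous fun z : ℝ × ℝ => fderiv ℝ w z (1, 0) := continuous_fderiv_app hw _
  have hf₂ : Continuous fun z : ℝ × ℝ => fderiv ℝ w z (0, 1) := continuous_fderiv_app hw _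
  have hG1c := continuous_evalP G.1
  have hG2c := continuous_evalP G.2
  have hu₀c := continuous_evalP u₀
  -- orthogonality
  have orth : ∀ q : Poly2 × Poly2, memRT j q →
      (∫ z in Set.Icc x₀ x₁ ×ˢ Set.Icc y₀ y₁,
        ((evalP G.1 z.1 z.2 - fderiv ℝ w z (1, 0)) * evalP q.1 z.1 z.2
          + (evalP G.2 z.1 z.2 - fderiv ℝ w z (0, 1)) * evalP q.2 z.1 z.2)) = 0 := by
    intro q hq
    have hq1c := continuous_evalP q.1
    have hq2c := continuous_evalP q.2
    have cbx : ∀ (p : Poly2) (c : ℝ), Continuous fun y : ℝ => evalP p c y := by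
      intro p c
      have h := (continuous_evalP p).comp
        (show Continuous fun y : ℝ => ((c, y) : ℝ × ℝ) from continuous_const.prodMk continuous_id)
      simpa [Function.comp_def] using h
    have cby : ∀ (p : Poly2) (c : ℝ), Continuous fun x : ℝ => evalP p x c := by
      intro p c
      have h := (continuous_evalP p).comp
        (show Continuous fun x : ℝ => ((x, c) : ℝ × ℝ) from continuous_id.prodMk continuous_const)
      simpa [Function.comp_def] using h
    have hd1c := continuous_evalP (pderiv 0 q.1)
    have hd2c := continuous_evalP (pderiv 1 q.2)
    have hdqc := continuous_evalP (divP q)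
    have h1 := ibp_x hx.le hy.le hw q.1
    have h2 := ibp_y hx.le hy.le hw q.2
    rw [integral_add (integrableOn_K (hf₁.fun_mul hq1c)) (integrableOn_K (hwc.fun_mul hd1c))] at h1
    rw [integral_add (integrableOn_K (hf₂.fun_mul hq2c)) (integrableOn_K (hwc.fun_mul hd2c))] at h2
    -- interior projection
    have h3 : (∫ z in Set.Icc x₀ x₁ ×ˢ Set.Icc y₀ y₁, w z * evalP (divP q) z.1 z.2)
        = ∫ z in Set.Icc x₀ x₁ ×ˢ Set.Icc y₀ y₁, evalP u₀ z.1 z.2 * evalP (divP q) z.1 z.2 := by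
      have h := hu₀proj (divP q) (memQ_divP hq)
      rw [setIntegral_congr_fun hKm (g := fun z : ℝ × ℝ =>
          w z * evalP (divP q) z.1 z.2 - evalP u₀ z.1 z.2 * evalP (divP q) z.1 z.2)
          (fun z _ => by ring)] at h
      rw [integral_sub (integrableOn_K (hwc.fun_mul hdqc)) (integrableOn_K (hu₀c.fun_mul hdqc))] at h
      linarith
    -- divergence splits
    have hdiv : (∫ z in Set.Icc x₀ x₁ ×ˢ Set.Icc y₀ y₁, w z * evalP (divP q) z.1 z.2)
        = (∫ z in Set.Icc x₀ x₁ ×ˢ Set.Icc y₀ y₁, w z * evalP (pderiv 0 q.1) z.1 z.2)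
          + ∫ z in Set.Icc x₀ x₁ ×ˢ Set.Icc y₀ y₁, w z * evalP (pderiv 1 q.2) z.1 z.2 := by
      rw [← integral_add (integrableOn_K (hwc.fun_mul hd1c)) (integrableOn_K (hwc.fun_mul hd2c))]
      refine setIntegral_congr_fun hKm fun z _ => ?_
      simp [divP, evalP, map_add, mul_add]
    -- boundary projections
    have hb1' : (∫ y in y₀..y₁, w (x₀, y) * evalP q.1 x₀ y)
        = ∫ y in y₀..y₁, ub₁.eval y * evalP q.1 x₀ y := by
      have h := hub₁ (traceX x₀ q.1) ((traceX_natDegree_le _ _).trans hq.1.2)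
      simp only [traceX_eval] at h
      rw [intervalIntegral.integral_congr (g := fun y =>
          w (x₀, y) * evalP q.1 x₀ y - ub₁.eval y * evalP q.1 x₀ y) (fun y _ => by ring)] at h
      rw [intervalIntegral.integral_sub
        (((cont_line_x hwc x₀).fun_mul (cbx q.1 x₀)).intervalIntegrable _ _)
        ((ub₁.continuous.fun_mul (cbx q.1 x₀)).intervalIntegrable _ _)] at h
      linarith
    have hb2' : (∫ y in y₀..y₁, w (x₁, y) * evalP q.1 x₁ y)
        = ∫ y in y₀..y₁, ub₂.eval y * evalP q.1 x₁ y := by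
      have h := hub₂ (traceX x₁ q.1) ((traceX_natDegree_le _ _).trans hq.1.2)
      simp only [traceX_eval] at h
      rw [intervalIntegral.integral_congr (g := fun y =>
          w (x₁, y) * evalP q.1 x₁ y - ub₂.eval y * evalP q.1 x₁ y) (fun y _ => by ring)] at h
      rw [intervalIntegral.integral_sub
        (((cont_line_x hwc x₁).fun_mul (cbx q.1 x₁)).intervalIntegrable _ _)
        ((ub₂.continuous.fun_mul (cbx q.1 x₁)).intervalIntegrable _ _)] at h
      linarith
    have hb3' : (∫ x in x₀..x₁, w (x, y₀) * evalP q.2 x y₀)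
        = ∫ x in x₀..x₁, ub₃.eval x * evalP q.2 x y₀ := by
      have h := hub₃ (traceY y₀ q.2) ((traceY_natDegree_le _ _).trans hq.2.1)
      simp only [traceY_eval] at h
      rw [intervalIntegral.integral_congr (g := fun x =>
          w (x, y₀) * evalP q.2 x y₀ - ub₃.eval x * evalP q.2 x y₀) (fun x _ => by ring)] at h
      rw [intervalIntegral.integral_sub
        (((cont_line_y hwc y₀).fun_mul (cby q.2 y₀)).intervalIntegrable _ _)
        ((ub₃.continuous.fun_mul (cby q.2 y₀)).intervalIntegrable _ _)] at h
      linarith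
    have hb4' : (∫ x in x₀..x₁, w (x, y₁) * evalP q.2 x y₁)
        = ∫ x in x₀..x₁, ub₄.eval x * evalP q.2 x y₁ := by
      have h := hub₄ (traceY y₁ q.2) ((traceY_natDegree_le _ _).trans hq.2.1)
      simp only [traceY_eval] at h
      rw [intervalIntegral.integral_congr (g := fun x =>
          w (x, y₁) * evalP q.2 x y₁ - ub₄.eval x * evalP q.2 x y₁) (fun x _ => by ring)] at h
      rw [intervalIntegral.integral_sub
        (((cont_line_y hwc y₁).fun_mul (cby q.2 y₁)).intervalIntegrable _ _)
        ((ub₄.continuous.fun_mul (cby q.2 y₁)).intervalIntegrable _ _)] at h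
      linarith
    have hGd := hGdef q hq
    have e1 : (∫ y in y₀..y₁, ub₁.eval y * (-(evalP q.1 x₀ y)))
        = -(∫ y in y₀..y₁, ub₁.eval y * evalP q.1 x₀ y) := by
      rw [← intervalIntegral.integral_neg]
      exact intervalIntegral.integral_congr fun y _ => by ring
    have e3 : (∫ x in x₀..x₁, ub₃.eval x * (-(evalP q.2 x y₀)))
        = -(∫ x in x₀..x₁, ub₃.eval x * evalP q.2 x y₀) := by
      rw [← intervalIntegral.integral_neg]
      exact intervalIntegral.integral_congr fun x _ => by ring
    have hsplit : (∫ z in Set.Icc x₀ x₁ ×ˢ Set.Icc y₀ y₁,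
        ((evalP G.1 z.1 z.2 - fderiv ℝ w z (1, 0)) * evalP q.1 z.1 z.2
          + (evalP G.2 z.1 z.2 - fderiv ℝ w z (0, 1)) * evalP q.2 z.1 z.2))
        = (∫ z in Set.Icc x₀ x₁ ×ˢ Set.Icc y₀ y₁,
            (evalP G.1 z.1 z.2 * evalP q.1 z.1 z.2 + evalP G.2 z.1 z.2 * evalP q.2 z.1 z.2))
          - ((∫ z in Set.Icc x₀ x₁ ×ˢ Set.Icc y₀ y₁, fderiv ℝ w z (1, 0) * evalP q.1 z.1 z.2)
            + ∫ z in Set.Icc x₀ x₁ ×ˢ Set.Icc y₀ y₁, fderiv ℝ w z (0, 1) * evalP q.2 z.1 z.2) := by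
      rw [← integral_add (integrableOn_K (hf₁.fun_mul hq1c)) (integrableOn_K (hf₂.fun_mul hq2c)),
        ← integral_sub
          (integrableOn_K ((hG1c.fun_mul hq1c).fun_add (hG2c.fun_mul hq2c)))
          (integrableOn_K ((hf₁.fun_mul hq1c).fun_add (hf₂.fun_mul hq2c)))]
      exact setIntegral_congr_fun hKm fun z _ => by ring
    rw [hsplit, hGd]
    linarith
  -- final argument
  intro q hq
  have hr := memRT_sub hq hG
  have horth := orth _ hr
  simp only [evalP_sub] at horth
  have hq1c := continuous_evalP q.1
  have hq2c := continuous_evalP q.2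
  have hA : Continuous fun z : ℝ × ℝ =>
      (evalP G.1 z.1 z.2 - fderiv ℝ w z (1, 0)) ^ 2
        + (evalP G.2 z.1 z.2 - fderiv ℝ w z (0, 1)) ^ 2 :=
    (((hG1c.fun_sub hf₁).fun_pow 2).fun_add ((hG2c.fun_sub hf₂).fun_pow 2))
  have hB : Continuous fun z : ℝ × ℝ =>
      (evalP G.1 z.1 z.2 - fderiv ℝ w z (1, 0)) * (evalP q.1 z.1 z.2 - evalP G.1 z.1 z.2)
        + (evalP G.2 z.1 z.2 - fderiv ℝ w z (0, 1)) * (evalP q.2 z.1 z.2 - evalP G.2 z.1 z.2) :=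
    ((hG1c.fun_sub hf₁).fun_mul (hq1c.fun_sub hG1c)).fun_add ((hG2c.fun_sub hf₂).fun_mul (hq2c.fun_sub hG2c))
  have hC : Continuous fun z : ℝ × ℝ =>
      (evalP q.1 z.1 z.2 - evalP G.1 z.1 z.2) ^ 2 + (evalP q.2 z.1 z.2 - evalP G.2 z.1 z.2) ^ 2 :=
    (((hq1c.fun_sub hG1c).fun_pow 2).fun_add ((hq2c.fun_sub hG2c).fun_pow 2))
  have hsplit : (∫ z in Set.Icc x₀ x₁ ×ˢ Set.Icc y₀ y₁,
        ((evalP q.1 z.1 z.2 - fderiv ℝ w z (1, 0)) ^ 2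
          + (evalP q.2 z.1 z.2 - fderiv ℝ w z (0, 1)) ^ 2))
      = (∫ z in Set.Icc x₀ x₁ ×ˢ Set.Icc y₀ y₁,
          ((evalP G.1 z.1 z.2 - fderiv ℝ w z (1, 0)) ^ 2
            + (evalP G.2 z.1 z.2 - fderiv ℝ w z (0, 1)) ^ 2))
        + ((2 : ℝ) * (∫ z in Set.Icc x₀ x₁ ×ˢ Set.Icc y₀ y₁,
            ((evalP G.1 z.1 z.2 - fderiv ℝ w z (1, 0)) * (evalP q.1 z.1 z.2 - evalP G.1 z.1 z.2)
              + (evalP G.2 z.1 z.2 - fderiv ℝ w z (0, 1)) * (evalP q.2 z.1 z.2 - evalP G.2 z.1 z.2)))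
          + ∫ z in Set.Icc x₀ x₁ ×ˢ Set.Icc y₀ y₁,
            ((evalP q.1 z.1 z.2 - evalP G.1 z.1 z.2) ^ 2
              + (evalP q.2 z.1 z.2 - evalP G.2 z.1 z.2) ^ 2)) := by
    rw [← MeasureTheory.integral_const_mul,
      ← integral_add (integrableOn_K (continuous_const.fun_mul hB)) (integrableOn_K hC),
      ← integral_add (integrableOn_K hA)
        (integrableOn_K ((continuous_const.fun_mul hB).fun_add hC))]
    exact setIntegral_congr_fun hKm fun z _ => by ring
  have hCnonneg : (0 : ℝ) ≤ ∫ z in Set.Icc x₀ x₁ ×ˢ Set.Icc y₀ y₁,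
      ((evalP q.1 z.1 z.2 - evalP G.1 z.1 z.2) ^ 2
        + (evalP q.2 z.1 z.2 - evalP G.2 z.1 z.2) ^ 2) :=
    setIntegral_nonneg hKm fun z _ => by positivity
  rw [hsplit, horth]
  linarith
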